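/- Let $U_1,\ldots,U_n \subseteq \mathbb{R}^p$ be linear subspaces, let $G = (\{1,\ldots,n\},\mathcal{E})$ be a connected oriented graph with $(i,j) \in \mathcal{E} \Rightarrow i < j$, let $G' \subseteq G$ be a connected spanning subgraph with Laplacian $L$, and let $Z \in \mathbb{R}^{n \times (n-1)}$ be full column rank with $L = Z Z^{\mathsf{T}}$. Fix $\theta \in (0,2)$ and initial points $v_1^0,\ldots,v_{n-1}^0 \in \mathbb{R}^p$, and consider the graph-based Douglas–Rachford iteration $x_i^{k+1} = P_{U_i}\big( \tfrac{2}{d_i} \sum_{(h,i) \in \mathcal{E}} x_h^{k+1} + \tfrac{1}{d_i} \sum_{j=1}^{n-1} Z_{i,j} v_j^k \big)$ for $i = 1,\ldots,n$, followed by $v_j^{k+1} = v_j^k - \theta \sum_{i=1}^n Z_{i,j} x_i^{k+1}$ for $j = 1,\ldots,n-1$. Then there exist $v_1^*,\ldots,v_{n-1}^* \in \mathbb{R}^p$ and $x^* \in \bigcap_{i=1}^n U_i$ such that $v_j^k \to v_j^*$ for all $j$, $x_i^k \to x^*$ for all $i$, and $x^* = \tfrac{2 d_i^{\mathrm{in}}}{d_i}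 P_{U_i}(x^*) + \tfrac{1}{d_i} \sum_{j=1}^{n-1} P_{U_i}(Z_{i,j} v_j^*)$ for every $i = 1,\ldots,n$. -/

import Mathlib

open Filter Topology Matrix RealInnerProductSpace

noncomputable def proj {p : ℕ} (U : Submodule ℝ (EuclideanSpace ℝ (Fin p)))
    (v : EuclideanSpace ℝ (Fin p)) : EuclideanSpace ℝ (Fin p) :=
  (Submodule.orthogonalProjection U v : EuclideanSpace ℝ (Fin p))

def din {n : ℕ} (E : Finset (Fin n × Fin n)) (i : Fin n) : ℕ :=
  (E.filter fun e => e.2 = i).card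

def dout {n : ℕ} (E : Finset (Fin n × Fin n)) (i : Fin n) : ℕ :=
  (E.filter fun e => e.1 = i).card

def deg {n : ℕ} (E : Finset (Fin n × Fin n)) (i : Fin n) : ℕ :=
  din E i + dout E i

noncomputable def lap {n : ℕ} (E : Finset (Fin n × Fin n)) :
    Matrix (Fin n) (Fin n) ℝ :=
  Matrix.of fun i j =>
    if i = j then (deg E i : ℝ) else if (i, j) ∈ E ∨ (j, i) ∈ E then -1 else 0

noncomputable def Xfun {p n : ℕ} (U : Fin n → Submodule ℝ (EuclideanSpace ℝ (Fin p)))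
    (𝓔 : Finset (Fin n × Fin n)) (Z : Matrix (Fin n) (Fin (n - 1)) ℝ)
    (v : Fin (n - 1) → EuclideanSpace ℝ (Fin p)) (i : Fin n) :
    EuclideanSpace ℝ (Fin p) :=
  proj (U i)
    (((2 : ℝ) / (deg 𝓔 i : ℝ)) • (∑ e ∈ 𝓔.filter fun e => e.2 = i,
        if h : e.1 < i then Xfun U 𝓔 Z v e.1 else 0) +
      ((1 : ℝ) / (deg 𝓔 i : ℝ)) • ∑ j, Z i j • v j)
termination_by i.1
decreasing_by exact h

section props
variable {p n : ℕ} (U : Fin n → Submodule ℝ (EuclideanSpace ℝ (Fin p)))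
    (𝓔 : Finset (Fin n × Fin n)) (Z : Matrix (Fin n) (Fin (n - 1)) ℝ)
    (hord : ∀ e ∈ 𝓔, e.1 < e.2)

include hord in
lemma Xfun_eq (v : Fin (n - 1) → EuclideanSpace ℝ (Fin p)) (i : Fin n) :
    Xfun U 𝓔 Z v i = proj (U i)
      (((2 : ℝ) / (deg 𝓔 i : ℝ)) • (∑ e ∈ 𝓔.filter fun e => e.2 = i, Xfun U 𝓔 Z v e.1) +
        ((1 : ℝ) / (deg 𝓔 i : ℝ)) • ∑ j, Z i j • v j) := by
  have hsum : (∑ e ∈ 𝓔.filter fun e => e.2 = i,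
      if h : e.1 < i then Xfun U 𝓔 Z v e.1 else 0) =
      ∑ e ∈ 𝓔.filter fun e => e.2 = i, Xfun U 𝓔 Z v e.1 := by
    refine Finset.sum_congr rfl fun e he => ?_
    rw [Finset.mem_filter] at he
    rw [dif_pos (he.2 ▸ hord e he.1)]
  rw [Xfun, hsum]

lemma fin_strong_induction {n : ℕ} {P : Fin n → Prop}
    (ih : ∀ i : Fin n, (∀ j : Fin n, j < i → P j) → P i) : ∀ i, P i := by
  have key : ∀ m, ∀ i : Fin n, i.1 < m → P i := by
    intro m
    induction m with
    | zero => intro i hi; omega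
    | succ m hm =>
      intro i hi
      exact ih i fun j hj => hm j (lt_of_lt_of_le hj (Nat.lt_succ_iff.mp hi))
  intro i; exact key (i.1 + 1) i (Nat.lt_succ_self _)

lemma proj_add {p : ℕ} (U : Submodule ℝ (EuclideanSpace ℝ (Fin p)))
    (a b : EuclideanSpace ℝ (Fin p)) : proj U (a + b) = proj U a + proj U b := by
  simp [proj, map_add]

lemma proj_smul {p : ℕ} (U : Submodule ℝ (EuclideanSpace ℝ (Fin p))) (c : ℝ)
    (a : EuclideanSpace ℝ (Fin p)) : proj U (c • a) = c • proj U a := by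
  simp [proj, _root_.map_smul]

include hord in
lemma Xfun_add (v w : Fin (n - 1) → EuclideanSpace ℝ (Fin p)) :
    ∀ i, Xfun U 𝓔 Z (v + w) i = Xfun U 𝓔 Z v i + Xfun U 𝓔 Z w i := by
  refine fin_strong_induction fun i ih => ?_
  have h1 : (∑ e ∈ 𝓔.filter fun e => e.2 = i, Xfun U 𝓔 Z (v + w) e.1)
      = (∑ e ∈ 𝓔.filter fun e => e.2 = i, Xfun U 𝓔 Z v e.1)
      + (∑ e ∈ 𝓔.filter fun e => e.2 = i, Xfun U 𝓔 Z w e.1) := by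
    rw [← Finset.sum_add_distrib]
    refine Finset.sum_congr rfl fun e he => ?_
    rw [Finset.mem_filter] at he
    exact ih e.1 (he.2 ▸ hord e he.1)
  have h2 : (∑ j, Z i j • (v + w) j) = (∑ j, Z i j • v j) + ∑ j, Z i j • w j := by
    rw [← Finset.sum_add_distrib]
    exact Finset.sum_congr rfl fun j _ => by simp [smul_add]
  rw [Xfun_eq U 𝓔 Z hord, Xfun_eq U 𝓔 Z hord, Xfun_eq U 𝓔 Z hord, h1, h2, ← proj_add]
  congr 1
  simp only [smul_add]
  abel

include hord in
lemma Xfun_smul (c : ℝ) (v : Fin (n - 1) → EuclideanSpace ℝ (Fin p)) :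
    ∀ i, Xfun U 𝓔 Z (c • v) i = c • Xfun U 𝓔 Z v i := by
  refine fin_strong_induction fun i ih => ?_
  have h1 : (∑ e ∈ 𝓔.filter fun e => e.2 = i, Xfun U 𝓔 Z (c • v) e.1)
      = c • ∑ e ∈ 𝓔.filter fun e => e.2 = i, Xfun U 𝓔 Z v e.1 := by
    rw [Finset.smul_sum]
    refine Finset.sum_congr rfl fun e he => ?_
    rw [Finset.mem_filter] at he
    exact ih e.1 (he.2 ▸ hord e he.1)
  have h2 : (∑ j, Z i j • (c • v) j) = c • ∑ j, Z i j • v j := by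
    rw [Finset.smul_sum]
    exact Finset.sum_congr rfl fun j _ => by rw [Pi.smul_apply]; exact smul_comm _ _ _
  rw [Xfun_eq U 𝓔 Z hord, Xfun_eq U 𝓔 Z hord, h1, h2, ← proj_smul]
  congr 1
  rw [smul_comm _ c, smul_comm _ c, ← smul_add]

include hord in
lemma x_eq_Xfun (x : ℕ → Fin n → EuclideanSpace ℝ (Fin p))
    (v : ℕ → Fin (n - 1) → EuclideanSpace ℝ (Fin p))
    (hx : ∀ k i, x (k + 1) i = proj (U i)
      (((2 : ℝ) / (deg 𝓔 i : ℝ)) • (∑ e ∈ 𝓔.filter fun e => e.2 = i, x (k + 1) e.1) +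
        ((1 : ℝ) / (deg 𝓔 i : ℝ)) • ∑ j, Z i j • v k j))
    (k : ℕ) : ∀ i, x (k + 1) i = Xfun U 𝓔 Z (v k) i := by
  refine fin_strong_induction fun i ih => ?_
  have hs : (∑ e ∈ 𝓔.filter fun e => e.2 = i, x (k + 1) e.1)
      = ∑ e ∈ 𝓔.filter fun e => e.2 = i, Xfun U 𝓔 Z (v k) e.1 := by
    refine Finset.sum_congr rfl fun e he => ?_
    rw [Finset.mem_filter] at he
    exact ih e.1 (he.2 ▸ hord e he.1)
  rw [hx k i, Xfun_eq U 𝓔 Z hord, hs]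

end props

-- combinatorial identities
lemma lap_apply {n : ℕ} (E : Finset (Fin n × Fin n)) (hE : ∀ e ∈ E, e.1 < e.2)
    (i l : Fin n) :
    lap E i l = (if i = l then (deg E i : ℝ) else 0)
      - ((if (i, l) ∈ E then 1 else 0) + (if (l, i) ∈ E then 1 else 0)) := by
  have hii : ∀ a : Fin n, (a, a) ∉ E := fun a ha => lt_irrefl _ (hE (a, a) ha)
  have hboth : ¬((i, l) ∈ E ∧ (l, i) ∈ E) := by
    rintro ⟨h1, h2⟩
    exact absurd (hE _ h2) (not_lt.mpr (hE _ h1).le)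
  unfold lap
  rcases eq_or_ne i l with rfl | hne
  · simp [hii i]
  · simp only [Matrix.of_apply, if_neg hne]
    by_cases h1 : (i, l) ∈ E <;> by_cases h2 : (l, i) ∈ E <;>
      simp_all

lemma lap_quad {n : ℕ} (E : Finset (Fin n × Fin n)) (hE : ∀ e ∈ E, e.1 < e.2)
    (c : Fin n → Fin n → ℝ) :
    ∑ i, ∑ l, lap E i l * c i l
      = ∑ e ∈ E, (c e.1 e.1 + c e.2 e.2 - c e.1 e.2 - c e.2 e.1) := by
  have key : ∀ i l, lap E i l * c i l
      = (if i = l then (deg E i : ℝ) * c i i else 0)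
        - ((if (i, l) ∈ E then c i l else 0) + (if (l, i) ∈ E then c i l else 0)) := by
    intro i l
    rw [lap_apply E hE]
    rcases eq_or_ne i l with rfl | hne
    · by_cases h1 : (i, i) ∈ E <;> simp [h1] <;> ring
    · by_cases h1 : (i, l) ∈ E <;> by_cases h2 : (l, i) ∈ E <;> simp [h1, h2, hne] <;> ring
  simp only [key]
  simp only [Finset.sum_sub_distrib, Finset.sum_add_distrib]
  have hA : ∑ i : Fin n, ∑ l : Fin n, (if i = l then (deg E i : ℝ) * c i i else 0)
      = ∑ e ∈ E, (c e.1 e.1 + c e.2 e.2) := by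
    have h1 : ∀ i : Fin n, ∑ l : Fin n, (if i = l then (deg E i : ℝ) * c i i else 0)
        = (deg E i : ℝ) * c i i := by
      intro i; rw [Finset.sum_ite_eq]; simp
    simp only [h1]
    have h2 : ∀ i : Fin n, (deg E i : ℝ) * c i i
        = (∑ e ∈ E, if e.2 = i then c i i else 0)
          + (∑ e ∈ E, if e.1 = i then c i i else 0) := by
      intro i
      simp only [Finset.sum_ite, Finset.sum_const, Finset.sum_const_zero, add_zero,
        nsmul_eq_mul]
      rw [deg, din, dout]
      push_cast
      ring
    simp only [h2]
    rw [Finset.sum_add_distrib, Finset.sum_comm (s := Finset.univ) (t := E),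
      Finset.sum_comm (s := Finset.univ) (t := E), ← Finset.sum_add_distrib]
    refine Finset.sum_congr rfl fun e _ => ?_
    rw [Finset.sum_ite_eq, Finset.sum_ite_eq]
    simp [add_comm]
  have hB : ∑ i : Fin n, ∑ l : Fin n, (if (i, l) ∈ E then c i l else 0)
      = ∑ e ∈ E, c e.1 e.2 := by
    rw [← Finset.sum_product', Finset.sum_ite_mem]
    congr 1
    simp [Finset.univ_product_univ]
  have hC : ∑ i : Fin n, ∑ l : Fin n, (if (l, i) ∈ E then c i l else 0)
      = ∑ e ∈ E, c e.2 e.1 := by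
    rw [Finset.sum_comm]
    have : ∀ l i : Fin n, (if (l, i) ∈ E then c i l else 0)
        = (if (l, i) ∈ E then (fun q : Fin n × Fin n => c q.2 q.1) (l, i) else 0) := by
      intro l i; rfl
    simp only [this]
    rw [← Finset.sum_product', Finset.sum_ite_mem]
    congr 1
    simp [Finset.univ_product_univ]
  rw [hA, hB, hC, Finset.sum_add_distrib]
  ring

variable {p : ℕ}
local notation "H" => EuclideanSpace ℝ (Fin p)

lemma norm_ZT {n m : ℕ} (Z : Matrix (Fin n) (Fin m) ℝ) (x : Fin n → H) :
    ∑ j, ‖∑ i, Z i j • x i‖ ^ 2 = ∑ i, ∑ l, (Z * Zᵀ) i l * ⟪x i, x l⟫ := by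
  have h1 : ∀ j, ‖∑ i, Z i j • x i‖ ^ 2 = ∑ i, ∑ l, (Z i j * Z l j) * ⟪x i, x l⟫ := by
    intro j
    rw [← real_inner_self_eq_norm_sq, sum_inner]
    refine Finset.sum_congr rfl fun i _ => ?_
    rw [inner_sum]
    refine Finset.sum_congr rfl fun l _ => ?_
    rw [real_inner_smul_left, real_inner_smul_right]
    ring
  simp only [h1]
  rw [Finset.sum_comm]
  refine Finset.sum_congr rfl fun i _ => ?_
  rw [Finset.sum_comm]
  refine Finset.sum_congr rfl fun l _ => ?_
  rw [Matrix.mul_apply, Finset.sum_mul]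
  refine Finset.sum_congr rfl fun j _ => ?_
  rw [Matrix.transpose_apply]

lemma inner_ZT {n m : ℕ} (Z : Matrix (Fin n) (Fin m) ℝ) (x : Fin n → H)
    (v : Fin m → H) :
    ∑ j, ⟪v j, ∑ i, Z i j • x i⟫ = ∑ i, ⟪∑ j, Z i j • v j, x i⟫ := by
  have h1 : ∀ j, ⟪v j, ∑ i, Z i j • x i⟫ = ∑ i, Z i j * ⟪v j, x i⟫ := by
    intro j
    rw [inner_sum]
    exact Finset.sum_congr rfl fun i _ => real_inner_smul_right _ _ _
  have h2 : ∀ i, ⟪∑ j, Z i j • v j, x i⟫ = ∑ j, Z i j * ⟪v j, x i⟫ := by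
    intro i
    rw [sum_inner]
    exact Finset.sum_congr rfl fun j _ => real_inner_smul_left _ _ _
  simp only [h1, h2]
  exact Finset.sum_comm


-- abstract convergence
section abstract
variable {E : Type*} [NormedAddCommGroup E] [InnerProductSpace ℝ E] [FiniteDimensional ℝ E]
theorem avg_converge (T : E →L[ℝ] E) (c : ℝ) (hc : 0 < c)
    (h : ∀ w, ‖T w‖ ^ 2 + c * ‖w - T w‖ ^ 2 ≤ ‖w‖ ^ 2) (w0 : E) :
    ∃ wst, T wst = wst ∧ Tendsto (fun k => T^[k] w0) atTop (𝓝 wst) := by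
  have hT1 : ∀ w, ‖T w‖ ≤ ‖w‖ := by
    intro w
    have := h w
    nlinarith [sq_nonneg (‖w - T w‖), norm_nonneg (T w), norm_nonneg w, sq_nonneg (‖T w‖ + ‖w‖),
      mul_nonneg hc.le (sq_nonneg ‖w - T w‖)]
  have hfix : ∀ w, ‖w‖ ≤ ‖T w‖ → T w = w := by
    intro w hw
    have hsq : ‖w‖ ^ 2 ≤ ‖T w‖ ^ 2 := pow_le_pow_left₀ (norm_nonneg w) hw 2
    have h2 : ‖w - T w‖ ^ 2 ≤ 0 := by nlinarith [h w]
    have h3 : ‖w - T w‖ = 0 := by nlinarith [sq_nonneg ‖w - T w‖, norm_nonneg (w - T w)]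
    have := sub_eq_zero.mp (norm_eq_zero.mp h3)
    exact this.symm
  -- the fixed space
  set K : Submodule ℝ E := LinearMap.ker ((T : E →ₗ[ℝ] E) - LinearMap.id) with hK
  have memK : ∀ w, w ∈ K ↔ T w = w := by
    intro w
    simp [hK, LinearMap.mem_ker, sub_eq_zero]
  -- adjoint fixes K
  have hTnorm : ‖T‖ ≤ 1 := by
    refine T.opNorm_le_bound zero_le_one ?_
    intro w; simpa using hT1 w
  have hadj : ∀ f ∈ K, ContinuousLinearMap.adjoint T f = f := by
    intro f hf
    have hTf : T f = f := (memK f).mp hf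
    have h1 : ‖ContinuousLinearMap.adjoint T f‖ ≤ ‖f‖ := by
      calc ‖ContinuousLinearMap.adjoint T f‖ ≤ ‖ContinuousLinearMap.adjoint T‖ * ‖f‖ :=
            (ContinuousLinearMap.adjoint T).le_opNorm f
        _ ≤ 1 * ‖f‖ := by
            have : ‖ContinuousLinearMap.adjoint T‖ = ‖T‖ :=
              ContinuousLinearMap.adjoint.norm_map T
            rw [this]; exact mul_le_mul_of_nonneg_right hTnorm (norm_nonneg f)
        _ = ‖f‖ := one_mul _
    have h2 : ⟪ContinuousLinearMap.adjoint T f, f⟫ = ‖f‖ ^ 2 := by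
      rw [ContinuousLinearMap.adjoint_inner_left, hTf, real_inner_self_eq_norm_sq]
    have h3 : ‖ContinuousLinearMap.adjoint T f - f‖ ^ 2 ≤ 0 := by
      rw [norm_sub_sq_real, h2]
      nlinarith [sq_nonneg ‖ContinuousLinearMap.adjoint T f‖,
        pow_le_pow_left₀ (norm_nonneg (ContinuousLinearMap.adjoint T f)) h1 2]
    have h4 : ‖ContinuousLinearMap.adjoint T f - f‖ = 0 := by
      nlinarith [norm_nonneg (ContinuousLinearMap.adjoint T f - f),
        sq_nonneg ‖ContinuousLinearMap.adjoint T f - f‖]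
    exact sub_eq_zero.mp (norm_eq_zero.mp h4)
  -- T maps Kᗮ into Kᗮ
  have hW : ∀ y ∈ Kᗮ, T y ∈ Kᗮ := by
    intro y hy
    intro f hf
    calc ⟪f, T y⟫ = ⟪ContinuousLinearMap.adjoint T f, y⟫ := by
          rw [ContinuousLinearMap.adjoint_inner_left]
      _ = ⟪f, y⟫ := by rw [hadj f hf]
      _ = 0 := hy f hf
  -- strict contraction on Kᗮ
  obtain ⟨r, hr0, hr1, hrC⟩ : ∃ r : ℝ, 0 ≤ r ∧ r < 1 ∧ ∀ y ∈ Kᗮ, ‖T y‖ ≤ r * ‖y‖ := by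
    by_cases hbot : Kᗮ = ⊥
    · refine ⟨0, le_refl 0, one_pos, fun y hy => ?_⟩
      rw [hbot, Submodule.mem_bot] at hy
      simp [hy]
    · obtain ⟨y0, hy0W, hy0ne⟩ := Submodule.exists_mem_ne_zero_of_ne_bot hbot
      set S : Set E := {y : E | y ∈ Kᗮ ∧ ‖y‖ = 1} with hS
      have hScompact : IsCompact S := by
        have h1 : S = (Kᗮ : Set E) ∩ Metric.sphere 0 1 := by
          ext y; simp [hS, Set.mem_setOf_eq, mem_sphere_iff_norm]
        rw [h1]
        exact ((isCompact_sphere (0 : E) 1).inter_left (Kᗮ.closed_of_finiteDimensional))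
      have hSne : S.Nonempty := by
        refine ⟨‖y0‖⁻¹ • y0, Kᗮ.smul_mem _ hy0W, ?_⟩
        rw [norm_smul, norm_inv, norm_norm, inv_mul_cancel₀ (norm_ne_zero_iff.mpr hy0ne)]
      obtain ⟨y1, hy1S, hy1max⟩ := hScompact.exists_isMaxOn hSne
        ((continuous_norm.comp T.continuous).continuousOn)
      refine ⟨‖T y1‖, norm_nonneg _, ?_, ?_⟩
      · rcases lt_or_ge ‖T y1‖ 1 with hlt | hge
        · exact hlt
        · exfalso
          have h1 : ‖y1‖ ≤ ‖T y1‖ := by rw [hy1S.2]; exact hge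
          have h2 : T y1 = y1 := hfix y1 h1
          have h3 : y1 ∈ K := (memK y1).mpr h2
          have h4 : ⟪y1, y1⟫ = 0 := hy1S.1 y1 h3
          rw [real_inner_self_eq_norm_sq, hy1S.2, one_pow] at h4
          exact one_ne_zero h4
      · intro y hy
        rcases eq_or_ne y 0 with rfl | hyne
        · simp
        · have hnorm : ‖(‖y‖⁻¹ • y)‖ = 1 := by
            rw [norm_smul, norm_inv, norm_norm, inv_mul_cancel₀ (norm_ne_zero_iff.mpr hyne)]
          have hmem : (‖y‖⁻¹ • y) ∈ S := ⟨Kᗮ.smul_mem _ hy, hnorm⟩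
          have h2 : ‖T (‖y‖⁻¹ • y)‖ ≤ ‖T y1‖ := hy1max hmem
          rw [_root_.map_smul, norm_smul, norm_inv, norm_norm] at h2
          calc ‖T y‖ = ‖y‖ * (‖y‖⁻¹ * ‖T y‖) := by
                rw [← mul_assoc, mul_inv_cancel₀ (norm_ne_zero_iff.mpr hyne), one_mul]
            _ ≤ ‖y‖ * ‖T y1‖ := by
                exact mul_le_mul_of_nonneg_left h2 (norm_nonneg y)
            _ = ‖T y1‖ * ‖y‖ := mul_comm _ _
  -- decompose w0
  set f : E := (Submodule.orthogonalProjection K w0 : E) with hf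
  set y : E := w0 - f with hy
  have hfK : f ∈ K := (Submodule.orthogonalProjection K w0).2
  have hyW : y ∈ Kᗮ := Submodule.sub_starProjection_mem_orthogonal (K := K) w0
  have hTf : T f = f := (memK f).mp hfK
  have hyk : ∀ k, T^[k] y ∈ Kᗮ ∧ ‖T^[k] y‖ ≤ r ^ k * ‖y‖ := by
    intro k
    induction k with
    | zero => simp [hyW]
    | succ k ih =>
      rw [Function.iterate_succ_apply']
      refine ⟨hW _ ih.1, ?_⟩
      calc ‖T (T^[k] y)‖ ≤ r * ‖T^[k] y‖ := hrC _ ih.1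
        _ ≤ r * (r ^ k * ‖y‖) := mul_le_mul_of_nonneg_left ih.2 hr0
        _ = r ^ (k + 1) * ‖y‖ := by ring
  have hiter : ∀ k, T^[k] w0 = f + T^[k] y := by
    intro k
    induction k with
    | zero => simp [hy]
    | succ k ih =>
      rw [Function.iterate_succ_apply', ih, map_add, hTf, Function.iterate_succ_apply']
  have hlim : Tendsto (fun k => T^[k] w0) atTop (𝓝 f) := by
    have h0 : Tendsto (fun k => T^[k] y) atTop (𝓝 0) := by
      refine squeeze_zero_norm (fun k => (hyk k).2) ?_
      have := (tendsto_pow_atTop_nhds_zero_of_lt_one hr0 hr1).mul_const ‖y‖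
      simpa using this
    have : Tendsto (fun k => f + T^[k] y) atTop (𝓝 (f + 0)) := tendsto_const_nhds.add h0
    rw [add_zero] at this
    exact this.congr fun k => (hiter k).symm
  exact ⟨f, hTf, hlim⟩

end abstract


lemma inner_proj_self {p : ℕ} (W : Submodule ℝ (EuclideanSpace ℝ (Fin p)))
    (y : EuclideanSpace ℝ (Fin p)) : ⟪y, proj W y⟫ = ‖proj W y‖ ^ 2 := by
  have h1 : y - proj W y ∈ Wᗮ := Submodule.sub_starProjection_mem_orthogonal (K := W) y
  have h2 : proj W y ∈ W := (Submodule.orthogonalProjection W y).2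
  have h0 : ⟪y - proj W y, proj W y⟫ = 0 := by
    rw [real_inner_comm]
    exact h1 (proj W y) h2
  calc ⟪y, proj W y⟫ = ⟪(y - proj W y) + proj W y, proj W y⟫ := by rw [sub_add_cancel]
    _ = ⟪y - proj W y, proj W y⟫ + ⟪proj W y, proj W y⟫ := inner_add_left _ _ _
    _ = ‖proj W y‖ ^ 2 := by rw [h0, real_inner_self_eq_norm_sq, zero_add]

lemma sum_deg_mul {n : ℕ} (E : Finset (Fin n × Fin n)) (f : Fin n → ℝ) :
    ∑ i, (deg E i : ℝ) * f i = ∑ e ∈ E, (f e.1 + f e.2) := by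
  have h2 : ∀ i : Fin n, (deg E i : ℝ) * f i
      = (∑ e ∈ E, if e.2 = i then f i else 0) + (∑ e ∈ E, if e.1 = i then f i else 0) := by
    intro i
    simp only [Finset.sum_ite, Finset.sum_const, Finset.sum_const_zero, add_zero,
      nsmul_eq_mul]
    rw [deg, din, dout]
    push_cast
    ring
  simp only [h2]
  rw [Finset.sum_add_distrib, Finset.sum_comm (s := Finset.univ) (t := E),
    Finset.sum_comm (s := Finset.univ) (t := E), ← Finset.sum_add_distrib]
  refine Finset.sum_congr rfl fun e _ => ?_
  rw [Finset.sum_ite_eq, Finset.sum_ite_eq]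
  simp [add_comm]

lemma sum_in_edges {n : ℕ} {M : Type*} [AddCommMonoid M] (E : Finset (Fin n × Fin n))
    (g : Fin n × Fin n → M) :
    ∑ i, ∑ e ∈ E.filter fun e => e.2 = i, g e = ∑ e ∈ E, g e :=
  Finset.sum_fiberwise E (fun e => e.2) g

section key
variable {p n : ℕ} (U : Fin n → Submodule ℝ (EuclideanSpace ℝ (Fin p)))
    (𝓔 : Finset (Fin n × Fin n)) (Z : Matrix (Fin n) (Fin (n - 1)) ℝ)
    (hord : ∀ e ∈ 𝓔, e.1 < e.2)

include hord in
lemma inner_node (v : Fin (n - 1) → EuclideanSpace ℝ (Fin p)) (i : Fin n) :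
    ⟪∑ j, Z i j • v j, Xfun U 𝓔 Z v i⟫
      = (deg 𝓔 i : ℝ) * ‖Xfun U 𝓔 Z v i‖ ^ 2
        - 2 * ⟪∑ e ∈ 𝓔.filter fun e => e.2 = i, Xfun U 𝓔 Z v e.1, Xfun U 𝓔 Z v i⟫ := by
  set s : EuclideanSpace ℝ (Fin p) := ∑ e ∈ 𝓔.filter fun e => e.2 = i, Xfun U 𝓔 Z v e.1
    with hs
  set w : EuclideanSpace ℝ (Fin p) := ∑ j, Z i j • v j with hw
  have hxx : Xfun U 𝓔 Z v i = proj (U i)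
      (((2 : ℝ) / (deg 𝓔 i : ℝ)) • s + ((1 : ℝ) / (deg 𝓔 i : ℝ)) • w) :=
    Xfun_eq U 𝓔 Z hord v i
  by_cases hd : (deg 𝓔 i : ℝ) = 0
  · have hdeg0 : deg 𝓔 i = 0 := by exact_mod_cast hd
    have hdin : din 𝓔 i = 0 := by
      have h := hdeg0
      unfold deg at h
      omega
    have hfil : (𝓔.filter fun e => e.2 = i) = ∅ := by
      have : (𝓔.filter fun e => e.2 = i).card = 0 := hdin
      exact Finset.card_eq_zero.mp this
    have hs0 : s = 0 := by rw [hs, hfil, Finset.sum_empty]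
    have hxx0 : Xfun U 𝓔 Z v i = 0 := by
      rw [hxx, hd]
      simp [proj]
    rw [hxx0, hs0]
    simp
  · have harg : w = (deg 𝓔 i : ℝ) • (((2 : ℝ) / (deg 𝓔 i : ℝ)) • s
        + ((1 : ℝ) / (deg 𝓔 i : ℝ)) • w) - (2 : ℝ) • s := by
      rw [smul_add, smul_smul, smul_smul]
      rw [show (deg 𝓔 i : ℝ) * ((2 : ℝ) / (deg 𝓔 i : ℝ)) = 2 by field_simp]
      rw [show (deg 𝓔 i : ℝ) * ((1 : ℝ) / (deg 𝓔 i : ℝ)) = 1 by field_simp]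
      rw [one_smul]
      abel
    calc ⟪w, Xfun U 𝓔 Z v i⟫
        = ⟪(deg 𝓔 i : ℝ) • (((2 : ℝ) / (deg 𝓔 i : ℝ)) • s
            + ((1 : ℝ) / (deg 𝓔 i : ℝ)) • w), Xfun U 𝓔 Z v i⟫
          - ⟪(2 : ℝ) • s, Xfun U 𝓔 Z v i⟫ := by rw [← inner_sub_left, ← harg]
      _ = (deg 𝓔 i : ℝ) * ‖Xfun U 𝓔 Z v i‖ ^ 2 - 2 * ⟪s, Xfun U 𝓔 Z v i⟫ := by
          rw [real_inner_smul_left, real_inner_smul_left]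
          congr 2
          rw [hxx]
          exact inner_proj_self _ _

include hord in
lemma inner_w_x_total (v : Fin (n - 1) → EuclideanSpace ℝ (Fin p)) :
    ∑ i, ⟪∑ j, Z i j • v j, Xfun U 𝓔 Z v i⟫
      = ∑ e ∈ 𝓔, ‖Xfun U 𝓔 Z v e.1 - Xfun U 𝓔 Z v e.2‖ ^ 2 := by
  simp only [inner_node U 𝓔 Z hord v]
  rw [Finset.sum_sub_distrib]
  have hA : ∑ i, (deg 𝓔 i : ℝ) * ‖Xfun U 𝓔 Z v i‖ ^ 2
      = ∑ e ∈ 𝓔, (‖Xfun U 𝓔 Z v e.1‖ ^ 2 + ‖Xfun U 𝓔 Z v e.2‖ ^ 2) :=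
    sum_deg_mul 𝓔 _
  have hB : ∑ i, 2 * ⟪∑ e ∈ 𝓔.filter fun e => e.2 = i, Xfun U 𝓔 Z v e.1, Xfun U 𝓔 Z v i⟫
      = 2 * ∑ e ∈ 𝓔, ⟪Xfun U 𝓔 Z v e.1, Xfun U 𝓔 Z v e.2⟫ := by
    rw [← Finset.mul_sum]
    congr 1
    have h1 : ∀ i : Fin n,
        ⟪∑ e ∈ 𝓔.filter fun e => e.2 = i, Xfun U 𝓔 Z v e.1, Xfun U 𝓔 Z v i⟫
        = ∑ e ∈ 𝓔.filter fun e => e.2 = i, ⟪Xfun U 𝓔 Z v e.1, Xfun U 𝓔 Z v e.2⟫ := by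
      intro i
      rw [sum_inner]
      refine Finset.sum_congr rfl fun e he => ?_
      rw [Finset.mem_filter] at he
      rw [he.2]
    simp only [h1]
    exact sum_in_edges 𝓔 _
  rw [hA, hB, Finset.mul_sum, ← Finset.sum_sub_distrib]
  refine Finset.sum_congr rfl fun e _ => ?_
  rw [norm_sub_sq_real]
  ring
end key

lemma proj_sum {p : ℕ} (W : Submodule ℝ (EuclideanSpace ℝ (Fin p))) {α : Type*}
    (s : Finset α) (f : α → EuclideanSpace ℝ (Fin p)) :
    proj W (∑ a ∈ s, f a) = ∑ a ∈ s, proj W (f a) := by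
  simp [proj, map_sum]

theorem stmt10 {p n : ℕ} (U : Fin n → Submodule ℝ (EuclideanSpace ℝ (Fin p)))
    (𝓔 𝓔' : Finset (Fin n × Fin n))
    (hord : ∀ e ∈ 𝓔, e.1 < e.2)
    (hsub : 𝓔' ⊆ 𝓔)
    (hconn : (SimpleGraph.fromRel fun i j => (i, j) ∈ 𝓔).Connected)
    (hconn' : (SimpleGraph.fromRel fun i j => (i, j) ∈ 𝓔').Connected)
    (Z : Matrix (Fin n) (Fin (n - 1)) ℝ)
    (hZrank : Z.rank = n - 1)
    (hL : lap 𝓔' = Z * Zᵀ)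
    (θ : ℝ) (hθ : θ ∈ Set.Ioo (0 : ℝ) 2)
    (x : ℕ → Fin n → EuclideanSpace ℝ (Fin p))
    (v : ℕ → Fin (n - 1) → EuclideanSpace ℝ (Fin p))
    (hx : ∀ k i, x (k + 1) i = proj (U i)
      (((2 : ℝ) / (deg 𝓔 i : ℝ)) • (∑ e ∈ 𝓔.filter fun e => e.2 = i, x (k + 1) e.1) +
        ((1 : ℝ) / (deg 𝓔 i : ℝ)) • ∑ j, Z i j • v k j))
    (hv : ∀ k j, v (k + 1) j = v k j - θ • ∑ i, Z i j • x (k + 1) i) :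
    ∃ (vstar : Fin (n - 1) → EuclideanSpace ℝ (Fin p))
      (xstar : EuclideanSpace ℝ (Fin p)),
      (∀ i, xstar ∈ U i) ∧
      (∀ j, Tendsto (fun k => v k j) atTop (𝓝 (vstar j))) ∧
      (∀ i, Tendsto (fun k => x k i) atTop (𝓝 xstar)) ∧
      (∀ i, xstar = ((2 * (din 𝓔 i : ℝ)) / (deg 𝓔 i : ℝ)) • proj (U i) xstar +
        ((1 : ℝ) / (deg 𝓔 i : ℝ)) • ∑ j, proj (U i) (Z i j • vstar j)) := by
  classical
  obtain ⟨hθ0, hθ2⟩ := hθ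
  have hord' : ∀ e ∈ 𝓔', e.1 < e.2 := fun e he => hord e (hsub he)
  -- the ambient Hilbert space of v-tuples
  let Ety : Type _ := PiLp 2 (fun _ : Fin (n - 1) => EuclideanSpace ℝ (Fin p))
  have hEtyS : ContinuousSMul ℝ Ety := inferInstance
  -- the iteration map as a linear map
  let Tl : Ety →ₗ[ℝ] Ety :=
    { toFun := fun u => WithLp.toLp 2 (fun j => u j - θ • ∑ i, Z i j • Xfun U 𝓔 Z u i)
      map_add' := by
        intro u w
        refine PiLp.ext fun j => ?_
        have h1 : ∀ i, Xfun U 𝓔 Z (u + w) i = Xfun U 𝓔 Z u i + Xfun U 𝓔 Z w i :=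
          Xfun_add U 𝓔 Z hord u w
        show (u j + w j) - θ • ∑ i, Z i j • Xfun U 𝓔 Z (u + w) i
          = (u j - θ • ∑ i, Z i j • Xfun U 𝓔 Z u i)
            + (w j - θ • ∑ i, Z i j • Xfun U 𝓔 Z w i)
        simp only [h1, smul_add, Finset.sum_add_distrib]
        abel
      map_smul' := by
        intro c u
        refine PiLp.ext fun j => ?_
        have h1 : ∀ i, Xfun U 𝓔 Z (c • u) i = c • Xfun U 𝓔 Z u i :=
          Xfun_smul U 𝓔 Z hord c u
        show (c • u j) - θ • ∑ i, Z i j • Xfun U 𝓔 Z (c • u) i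
          = c • (u j - θ • ∑ i, Z i j • Xfun U 𝓔 Z u i)
        simp only [h1]
        rw [smul_sub, smul_comm c θ]
        congr 2
        rw [Finset.smul_sum]
        exact Finset.sum_congr rfl fun i _ => smul_comm _ _ _ }
  let Tc : Ety →L[ℝ] Ety := LinearMap.toContinuousLinearMap Tl
  -- quadratic forms
  have hQ' : ∀ u : Fin n → EuclideanSpace ℝ (Fin p),
      ∑ j, ‖∑ i, Z i j • u i‖ ^ 2 = ∑ e ∈ 𝓔', ‖u e.1 - u e.2‖ ^ 2 := by
    intro u
    rw [norm_ZT Z u, ← hL, lap_quad 𝓔' hord' (fun i l => ⟪u i, u l⟫)]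
    refine Finset.sum_congr rfl fun e _ => ?_
    rw [norm_sub_sq_real, real_inner_self_eq_norm_sq, real_inner_self_eq_norm_sq,
      real_inner_comm (u e.1) (u e.2)]
    ring
  -- the contraction inequality
  have hkey : ∀ w : Ety, ‖Tc w‖ ^ 2 + ((2 - θ) / θ) * ‖w - Tc w‖ ^ 2 ≤ ‖w‖ ^ 2 := by
    intro w
    set xx : Fin n → EuclideanSpace ℝ (Fin p) := Xfun U 𝓔 Z w with hxx
    have hW : ∀ j, (Tc w) j = w j - θ • ∑ i, Z i j • xx i := fun j => rfl
    have hwsub : ∀ j, (w - Tc w) j = θ • ∑ i, Z i j • xx i := by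
      intro j
      have : (w - Tc w) j = w j - (Tc w) j := rfl
      rw [this, hW]
      abel
    have hA : ∑ j, ⟪w j, ∑ i, Z i j • xx i⟫ = ∑ e ∈ 𝓔, ‖xx e.1 - xx e.2‖ ^ 2 := by
      rw [inner_ZT Z xx w]
      exact inner_w_x_total U 𝓔 Z hord w
    have hB : ∑ j, ‖∑ i, Z i j • xx i‖ ^ 2 = ∑ e ∈ 𝓔', ‖xx e.1 - xx e.2‖ ^ 2 := hQ' xx
    have hsubQ : ∑ e ∈ 𝓔', ‖xx e.1 - xx e.2‖ ^ 2 ≤ ∑ e ∈ 𝓔, ‖xx e.1 - xx e.2‖ ^ 2 :=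
      Finset.sum_le_sum_of_subset_of_nonneg hsub fun e _ _ => sq_nonneg _
    have hnT : ‖Tc w‖ ^ 2 = ∑ j, ‖w j - θ • ∑ i, Z i j • xx i‖ ^ 2 := by
      rw [PiLp.norm_sq_eq_of_L2]
      exact Finset.sum_congr rfl fun j _ => by rw [hW]
    have hnW : ‖w - Tc w‖ ^ 2 = θ ^ 2 * ∑ j, ‖∑ i, Z i j • xx i‖ ^ 2 := by
      rw [PiLp.norm_sq_eq_of_L2, Finset.mul_sum]
      refine Finset.sum_congr rfl fun j _ => ?_
      rw [hwsub, norm_smul]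
      simp [abs_of_pos hθ0]
      ring
    have hnw : ‖w‖ ^ 2 = ∑ j, ‖w j‖ ^ 2 := PiLp.norm_sq_eq_of_L2 _ w
    have hexp : ∀ j, ‖w j - θ • ∑ i, Z i j • xx i‖ ^ 2
        = ‖w j‖ ^ 2 - 2 * θ * ⟪w j, ∑ i, Z i j • xx i⟫
          + θ ^ 2 * ‖∑ i, Z i j • xx i‖ ^ 2 := by
      intro j
      rw [norm_sub_sq_real, real_inner_smul_right, norm_smul, Real.norm_eq_abs,
        mul_pow, sq_abs]
      ring
    rw [hnT, hnW, hnw]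
    simp only [hexp]
    rw [Finset.sum_add_distrib, Finset.sum_sub_distrib, ← Finset.mul_sum, ← Finset.mul_sum,
      hA, hB]
    have hdiv : (2 - θ) / θ * θ ^ 2 = (2 - θ) * θ := by
      field_simp
    nlinarith [hsubQ, Finset.sum_nonneg (fun e (_ : e ∈ 𝓔') => sq_nonneg ‖xx e.1 - xx e.2‖),
      mul_nonneg hθ0.le (sub_nonneg.mpr hsubQ)]
  -- apply abstract convergence
  obtain ⟨vst, hvfix, hvlim⟩ := avg_converge Tc ((2 - θ) / θ)
    (div_pos (by linarith) hθ0) hkey (WithLp.toLp 2 (v 0))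
  -- the orbit is the iteration
  have hxk : ∀ k i, x (k + 1) i = Xfun U 𝓔 Z (v k) i := fun k =>
    x_eq_Xfun U 𝓔 Z hord x v hx k
  have horbit : ∀ k, (WithLp.toLp 2 (v k) : Ety) = Tc^[k] (WithLp.toLp 2 (v 0) : Ety) := by
    intro k
    induction k with
    | zero => rfl
    | succ k ih =>
      rw [Function.iterate_succ_apply', ← ih]
      refine PiLp.ext fun j => ?_
      have : (Tc (WithLp.toLp 2 (v k) : Ety)) j = v k j - θ • ∑ i, Z i j • Xfun U 𝓔 Z (v k) i := rfl
      rw [this, WithLp.ofLp_toLp, hv k j]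
      congr 2
      exact Finset.sum_congr rfl fun i _ => by rw [hxk k i]
  -- componentwise convergence of v
  have hvtend : ∀ j, Tendsto (fun k => v k j) atTop (𝓝 (vst j)) := by
    intro j
    have hcont : Continuous fun u : Ety => u j := by
      let evj : Ety →ₗ[ℝ] EuclideanSpace ℝ (Fin p) :=
        { toFun := fun u => u j
          map_add' := fun a b => rfl
          map_smul' := fun c a => rfl }
      exact evj.continuous_of_finiteDimensional
    have := (hcont.tendsto vst).comp hvlim
    refine this.congr fun k => ?_
    simp only [Function.comp_apply]
    rw [← horbit k]
  -- limit of x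
  set xs : Fin n → EuclideanSpace ℝ (Fin p) := Xfun U 𝓔 Z vst with hxs
  have hXcont : ∀ i, Continuous fun u : Ety => Xfun U 𝓔 Z u i := by
    intro i
    let Xl : Ety →ₗ[ℝ] EuclideanSpace ℝ (Fin p) :=
      { toFun := fun u => Xfun U 𝓔 Z u i
        map_add' := fun u w => Xfun_add U 𝓔 Z hord u w i
        map_smul' := fun c u => Xfun_smul U 𝓔 Z hord c u i }
    exact Xl.continuous_of_finiteDimensional
  have hxtends : ∀ i, Tendsto (fun k => x k i) atTop (𝓝 (xs i)) := by
    intro i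
    have h1 : Tendsto (fun k => x (k + 1) i) atTop (𝓝 (xs i)) := by
      have := ((hXcont i).tendsto vst).comp hvlim
      refine this.congr fun k => ?_
      simp only [Function.comp_apply]
      rw [hxk k i, ← horbit k, WithLp.ofLp_toLp]
    exact (tendsto_add_atTop_iff_nat 1).mp h1
  -- fixed point : Zᵀ xs = 0
  have hZt0 : ∀ j, ∑ i, Z i j • xs i = 0 := by
    intro j
    have h1 : (Tc vst) j = vst j - θ • ∑ i, Z i j • xs i := rfl
    have h2 : (Tc vst) j = vst j := by rw [hvfix]
    have h3 : θ • ∑ i, Z i j • xs i = 0 := by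
      have h5 : vst j = vst j - θ • ∑ i, Z i j • xs i := h2.symm.trans h1
      have h6 : θ • ∑ i, Z i j • xs i
          = vst j - (vst j - θ • ∑ i, Z i j • xs i) := by abel
      rw [h6, ← h5, sub_self]
    rcases smul_eq_zero.mp h3 with h | h
    · exact absurd h (ne_of_gt hθ0)
    · exact h
  -- edges of 𝓔' force equality
  have hedge : ∀ e ∈ 𝓔', xs e.1 = xs e.2 := by
    intro e he
    have h1 : ∑ e ∈ 𝓔', ‖xs e.1 - xs e.2‖ ^ 2 = 0 := by
      rw [← hQ' xs]
      refine Finset.sum_eq_zero fun j _ => ?_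
      rw [hZt0 j]
      simp
    have h2 : ‖xs e.1 - xs e.2‖ ^ 2 = 0 :=
      (Finset.sum_eq_zero_iff_of_nonneg fun e _ => sq_nonneg _).mp h1 e he
    have h3 : xs e.1 - xs e.2 = 0 := by
      rw [pow_eq_zero_iff (by norm_num)] at h2
      exact norm_eq_zero.mp h2
    exact sub_eq_zero.mp h3
  -- all components equal by connectivity of 𝓔'
  have hadj : ∀ a b : Fin n,
      (SimpleGraph.fromRel fun i j => (i, j) ∈ 𝓔').Adj a b → xs a = xs b := by
    intro a b hab
    rw [SimpleGraph.fromRel_adj] at hab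
    rcases hab.2 with h | h
    · exact hedge (a, b) h
    · exact (hedge (b, a) h).symm
  have hallEq : ∀ a b : Fin n, xs a = xs b := by
    intro a b
    obtain ⟨w⟩ := hconn'.preconnected a b
    induction w with
    | nil => rfl
    | cons h q ih => exact (hadj _ _ h).trans ih
  have hne : Nonempty (Fin n) := hconn'.nonempty
  obtain ⟨i0⟩ := hne
  refine ⟨vst, xs i0, ?_, ?_, ?_, ?_⟩
  · -- membership
    intro i
    rw [← hallEq i i0, hxs, Xfun_eq U 𝓔 Z hord]
    exact (Submodule.orthogonalProjection (U i) _).2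
  · exact hvtend
  · intro i
    rw [← hallEq i i0]
    exact hxtends i
  · -- fixed point equation
    intro i
    have h1 : xs i = proj (U i)
        (((2 : ℝ) / (deg 𝓔 i : ℝ)) • (∑ e ∈ 𝓔.filter fun e => e.2 = i, xs e.1) +
          ((1 : ℝ) / (deg 𝓔 i : ℝ)) • ∑ j, Z i j • vst j) := Xfun_eq U 𝓔 Z hord vst i
    have h2 : (∑ e ∈ 𝓔.filter fun e => e.2 = i, xs e.1) = (din 𝓔 i : ℝ) • xs i := by
      rw [Finset.sum_congr rfl fun e _ => hallEq e.1 i, Finset.sum_const,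
        Nat.cast_smul_eq_nsmul ℝ]
      rfl
    have h4 : xs i = ((2 * (din 𝓔 i : ℝ)) / (deg 𝓔 i : ℝ)) • proj (U i) (xs i) +
        ((1 : ℝ) / (deg 𝓔 i : ℝ)) • ∑ j, proj (U i) (Z i j • vst j) := by
      conv_lhs => rw [h1]
      rw [h2, smul_smul, proj_add, proj_smul, proj_smul, proj_sum]
      congr 2
      ring
    rw [hallEq i0 i]
    exact h4
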